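/- With the notation of the dyadic setup, there exists a constant C > 0 (depending only on α, θ, Γ) such that for all integers Q ≥ 2, all q ≤ Q, and all integers k ≥ 1: |E_q^{(B)}(k)| ≤ C · √(k · N_q^θ). -/

import Mathlib

open Finset

noncomputable section

/-- `e(x) = exp(2πix)`. -/
def e2 (x : ℝ) : ℂ := Complex.exp (2 * Real.pi * x * Complex.I)

/-- The integers in the real interval `[A, B)`. -/
def intIco (A B : ℝ) : Finset ℤ := Finset.Icc ⌈A⌉ (⌈B⌉ - 1)

/-- The integers in the real interval `(A, B]`. -/
def intIoc (A B : ℝ) : Finset ℤ := Finset.Icc (⌊A⌋ + 1) ⌊B⌋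

/-- The Fourier transform `f̂(ξ) = ∫ f(x) e(−xξ) dx`. -/
def FT (f : ℝ → ℝ) (ξ : ℝ) : ℂ :=
  ∫ x : ℝ, (f x : ℂ) * Complex.exp (-(2 * Real.pi * x * ξ) * Complex.I)

/-- `Θ = 1/(1−θ)`. -/
def Th (θ : ℝ) : ℝ := 1 / (1 - θ)

/-- `N_q = q^Γ` for `q ≤ Q`, with the convention `N_{Q+1} = N_Q + 1`. -/
def Nq (Γ Q q : ℕ) : ℕ := if q = Q + 1 then Q ^ Γ + 1 else q ^ Γ

/-- `c₁ = e(−1/8) √(Θ(αθ)^Θ)`. -/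
def c1 (α θ : ℝ) : ℂ := e2 (-(1/8)) * (Real.sqrt (Th θ * (α * θ) ^ Th θ) : ℝ)

/-- `β = α^Θ (θ^{1−Θ} − θ^Θ)`. -/
def betaC (α θ : ℝ) : ℝ := α ^ Th θ * (θ ^ (1 - Th θ) - θ ^ Th θ)

/-- The integers in `R_q(k) = (αθk N_{q+1}^{θ−1}, αθk N_q^{θ−1}]`. -/
def Rq (α θ : ℝ) (Γ Q q : ℕ) (k : ℤ) : Finset ℤ :=
  intIoc (α * θ * (k : ℝ) * (Nq Γ Q (q + 1) : ℝ) ^ (θ - 1))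
    (α * θ * (k : ℝ) * (Nq Γ Q q : ℝ) ^ (θ - 1))

/-- `E_q(k) = ∑_{N_q ≤ y < N_{q+1}} e(α k y^θ)`. -/
def Eqf (α θ : ℝ) (Γ Q q : ℕ) (k : ℤ) : ℂ :=
  ∑ y ∈ Finset.Ico (Nq Γ Q q) (Nq Γ Q (q + 1)), e2 (α * (k : ℝ) * (y : ℝ) ^ θ)

/-- `E_q^{(B)}(k) = c₁ ∑_{r ∈ R_q(k)} k^{Θ/2} r^{−(Θ+1)/2} e(β k^Θ r^{1−Θ})`. -/
def EB (α θ : ℝ) (Γ Q q : ℕ) (k : ℤ) : ℂ :=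
  c1 α θ * ∑ r ∈ Rq α θ Γ Q q k,
    (((k : ℝ) ^ (Th θ / 2) * (r : ℝ) ^ (-(Th θ + 1) / 2) : ℝ) : ℂ) *
      e2 (betaC α θ * (k : ℝ) ^ Th θ * (r : ℝ) ^ (1 - Th θ))

/-- `ℰ_{q,u}(N) = (2/N²) ∑_{e^u ≤ k < e^{u+1}} f̂(k/N) E_{q₁}(k) conj(E_{q₂}(k))`
with `N = Q^Γ`. -/
def Ecal (α θ : ℝ) (f : ℝ → ℝ) (Γ Q q₁ q₂ u : ℕ) : ℂ :=
  (2 / ((Q : ℝ) ^ Γ) ^ 2) * ∑ k ∈ intIco (Real.exp u) (Real.exp ((u : ℝ) + 1)),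
    FT f ((k : ℝ) / (Q : ℝ) ^ Γ) * Eqf α θ Γ Q q₁ k *
      (starRingEnd ℂ) (Eqf α θ Γ Q q₂ k)

/-- `U` is the integer with `e^U ≤ N^{1+ε} < e^{U+1}`, i.e. `⌊(1+ε) log N⌋`. -/
def Udef (ε : ℝ) (Γ Q : ℕ) : ℕ := ⌊(1 + ε) * Real.log ((Q : ℝ) ^ Γ)⌋₊

/-- `S_{Λ,η}(u)`: the supremum of `|∑_{k ∈ I} e(γ k^Θ)|` over `γ ∈ [Λ, ηΛ)` and
subintervals `I = [A, B) ⊆ [e^u, e^{u+1})`. -/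
def SLam (θ Λ η : ℝ) (u : ℕ) : ℝ :=
  sSup {x : ℝ | ∃ γ A B : ℝ, Λ ≤ γ ∧ γ < η * Λ ∧ Real.exp u ≤ A ∧ A ≤ B ∧
    B ≤ Real.exp ((u : ℝ) + 1) ∧
    x = ‖∑ k ∈ intIco A B, e2 (γ * (k : ℝ) ^ Th θ)‖}

/-- `J_{u,q} = {j ∈ ℤ : 0 ≤ j < u − (1−ε)(1−θ)Γ log q}`. -/
def Jset (ε θ : ℝ) (Γ u q : ℕ) : Finset ℤ :=
  intIco 0 ((u : ℝ) - (1 - ε) * (1 - θ) * (Γ : ℝ) * Real.log q)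

/-- The diagonal term `D_{u,q}`. -/
def Duq (α θ : ℝ) (f : ℝ → ℝ) (Γ Q u q : ℕ) : ℂ :=
  2 * ((Th θ * (α * θ) ^ Th θ : ℝ) : ℂ) *
    ∑ k ∈ intIco (Real.exp u) (Real.exp ((u : ℝ) + 1)),
      FT f ((k : ℝ) / (Q : ℝ) ^ Γ) *
        ((∑ r ∈ Rq α θ Γ Q q k,
          (k : ℝ) ^ Th θ * (r : ℝ) ^ (-(Th θ + 1)) : ℝ) : ℂ)

lemma norm_e2 (x : ℝ) : ‖e2 x‖ = 1 := by
  rw [e2, show (2:ℂ) * Real.pi * x * Complex.I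
      = ((2 * Real.pi * x : ℝ) : ℂ) * Complex.I by push_cast; ring]
  exact Complex.norm_exp_ofReal_mul_I _

/-- Pure `rpow` algebra for the trivial bound. -/
lemma alg_aux (θ Θ : ℝ) (hθ0 : 0 < θ) (hθ1 : θ < 1) (hΘθ : (1 - θ) * Θ = 1) (Γ : ℕ)
    (c K P P' : ℝ) (hc : 0 < c) (hK : 1 ≤ K) (hP : 1 ≤ P) (hP' : 1 ≤ P')
    (hle : P' ≤ 2 ^ Γ * P) :
    2 * (c * K * P ^ (θ - 1)) *
        (K ^ (Θ / 2) * (c * K * P' ^ (θ - 1)) ^ (-(Θ + 1) / 2)) ≤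
      2 * c ^ ((1 - Θ) / 2) * 2 ^ Γ * (K ^ ((1:ℝ) / 2) * P ^ (θ / 2)) := by
  have hK0 : (0:ℝ) < K := lt_of_lt_of_le one_pos hK
  have hP0 : (0:ℝ) < P := lt_of_lt_of_le one_pos hP
  have hP'0 : (0:ℝ) < P' := lt_of_lt_of_le one_pos hP'
  have hΘ1 : 1 < Θ := by nlinarith
  have hexp : (1 - θ) * ((Θ + 1) / 2) = (2 - θ) / 2 := by linear_combination hΘθ / 2
  have hs0 : (0:ℝ) ≤ (2 - θ) / 2 := by linarith
  have hs1 : (2 - θ) / 2 ≤ 1 := by linarith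
  have e1 : (c * K * P' ^ (θ - 1)) ^ (-(Θ + 1) / 2)
      = c ^ (-(Θ + 1) / 2) * K ^ (-(Θ + 1) / 2) * P' ^ ((2 - θ) / 2) := by
    have hexp2 : (θ - 1) * (-(Θ + 1) / 2) = (2 - θ) / 2 := by
      linear_combination hΘθ / 2
    rw [Real.mul_rpow (by positivity) (by positivity), Real.mul_rpow hc.le hK0.le,
      ← Real.rpow_mul hP'0.le, hexp2]
  have ec : c * c ^ (-(Θ + 1) / 2) = c ^ ((1 - Θ) / 2) := by
    rw [show (1 - Θ)/2 = 1 + -(Θ + 1)/2 by ring, Real.rpow_add hc, Real.rpow_one]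
  have eK : K * K ^ (Θ / 2) * K ^ (-(Θ + 1) / 2) = K ^ ((1:ℝ) / 2) := by
    rw [show (1:ℝ)/2 = 1 + Θ/2 + -(Θ + 1)/2 by ring, Real.rpow_add hK0,
      Real.rpow_add hK0, Real.rpow_one]
  have eP : P ^ (θ - 1) * P ^ ((2 - θ) / 2) = P ^ (θ / 2) := by
    rw [← Real.rpow_add hP0]
    congr 1
    ring
  have h2Γ : (1:ℝ) ≤ 2 ^ Γ := one_le_pow₀ (by norm_num)
  have hP'b : P' ^ ((2 - θ) / 2) ≤ 2 ^ Γ * P ^ ((2 - θ) / 2) := by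
    calc P' ^ ((2 - θ) / 2) ≤ (2 ^ Γ * P) ^ ((2 - θ) / 2) :=
          Real.rpow_le_rpow hP'0.le hle hs0
      _ = ((2:ℝ) ^ Γ) ^ ((2 - θ) / 2) * P ^ ((2 - θ) / 2) :=
          Real.mul_rpow (by positivity) hP0.le
      _ ≤ 2 ^ Γ * P ^ ((2 - θ) / 2) := by
          have h1 : ((2:ℝ) ^ Γ) ^ ((2 - θ) / 2) ≤ ((2:ℝ) ^ Γ) ^ (1:ℝ) :=
            Real.rpow_le_rpow_of_exponent_le h2Γ hs1
          rw [Real.rpow_one] at h1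
          exact mul_le_mul_of_nonneg_right h1 (by positivity)
  rw [e1]
  have hre : 2 * (c * K * P ^ (θ - 1)) *
      (K ^ (Θ / 2) * (c ^ (-(Θ + 1) / 2) * K ^ (-(Θ + 1) / 2) * P' ^ ((2 - θ) / 2)))
      = 2 * (c * c ^ (-(Θ + 1) / 2)) * (K * K ^ (Θ / 2) * K ^ (-(Θ + 1) / 2)) *
        (P ^ (θ - 1) * P' ^ ((2 - θ) / 2)) := by ring
  rw [hre, ec, eK]
  have hPP : P ^ (θ - 1) * P' ^ ((2 - θ) / 2) ≤ 2 ^ Γ * P ^ (θ / 2) := by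
    calc P ^ (θ - 1) * P' ^ ((2 - θ) / 2)
        ≤ P ^ (θ - 1) * (2 ^ Γ * P ^ ((2 - θ) / 2)) :=
          mul_le_mul_of_nonneg_left hP'b (by positivity)
      _ = 2 ^ Γ * (P ^ (θ - 1) * P ^ ((2 - θ) / 2)) := by ring
      _ = 2 ^ Γ * P ^ (θ / 2) := by rw [eP]
  calc 2 * c ^ ((1 - Θ) / 2) * K ^ ((1:ℝ) / 2) * (P ^ (θ - 1) * P' ^ ((2 - θ) / 2))
      ≤ 2 * c ^ ((1 - Θ) / 2) * K ^ ((1:ℝ) / 2) * (2 ^ Γ * P ^ (θ / 2)) :=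
        mul_le_mul_of_nonneg_left hPP (by positivity)
    _ = 2 * c ^ ((1 - Θ) / 2) * 2 ^ Γ * (K ^ ((1:ℝ) / 2) * P ^ (θ / 2)) := by ring

/-- **Trivial bound for `E_q^{(B)}`** (equation (2.7)): there is `C > 0`
depending only on `α, θ, Γ` such that `|E_q^{(B)}(k)| ≤ C √(k N_q^θ)` for all
`Q ≥ 2`, `1 ≤ q ≤ Q` and integers `k ≥ 1`. -/
theorem stmt11 (α θ : ℝ) (hα : 0 < α) (hθ : θ ∈ Set.Ioo (0 : ℝ) 1)
    (Γ : ℕ) (hΓ : 1 ≤ Γ) :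
    ∃ C : ℝ, 0 < C ∧
      ∀ Q : ℕ, 2 ≤ Q → ∀ q : ℕ, 1 ≤ q → q ≤ Q → ∀ k : ℤ, 1 ≤ k →
        ‖EB α θ Γ Q q k‖ ≤ C * Real.sqrt ((k : ℝ) * (Nq Γ Q q : ℝ) ^ θ) := by
  obtain ⟨hθ0, hθ1⟩ := hθ
  have h1θ : (0:ℝ) < 1 - θ := by linarith
  have hΘθ : (1 - θ) * Th θ = 1 := by rw [Th]; field_simp
  have hΘ1 : 1 < Th θ := by rw [Th, lt_div_iff₀ h1θ]; linarith
  have hc0 : (0:ℝ) < α * θ := mul_pos hα hθ0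
  set C0 : ℝ := ‖c1 α θ‖ * (2 * (α * θ) ^ ((1 - Th θ) / 2) * 2 ^ Γ) with hC0
  refine ⟨max 1 C0, lt_of_lt_of_le one_pos (le_max_left _ _), ?_⟩
  intro Q hQ q hq1 hqQ k hk
  have hqQ1 : q ≠ Q + 1 := by omega
  -- facts on N_q
  have hPnat : Nq Γ Q q = q ^ Γ := by rw [Nq, if_neg hqQ1]
  have hP1 : (1:ℝ) ≤ (Nq Γ Q q : ℝ) := by
    rw [hPnat]
    exact_mod_cast Nat.one_le_iff_ne_zero.mpr (pow_ne_zero _ (by omega))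
  have hP'1 : (1:ℝ) ≤ (Nq Γ Q (q + 1) : ℝ) := by
    rw [Nq]
    by_cases h : q + 1 = Q + 1
    · rw [if_pos h]; exact_mod_cast Nat.le_add_left 1 _
    · rw [if_neg h]
      exact_mod_cast Nat.one_le_iff_ne_zero.mpr (pow_ne_zero _ (by omega))
  have hP'le : (Nq Γ Q (q + 1) : ℝ) ≤ 2 ^ Γ * (Nq Γ Q q : ℝ) := by
    have hnat : Nq Γ Q (q + 1) ≤ 2 ^ Γ * Nq Γ Q q := by
      rw [hPnat, Nq]
      by_cases h : q + 1 = Q + 1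
      · rw [if_pos h]
        have hq' : q = Q := by omega
        subst hq'
        have h1 : 1 ≤ q ^ Γ := Nat.one_le_iff_ne_zero.mpr (pow_ne_zero _ (by omega))
        have h2 : 2 ≤ 2 ^ Γ := Nat.one_lt_two_pow_iff.mpr (by omega)
        calc q ^ Γ + 1 ≤ 2 * q ^ Γ := by omega
          _ ≤ 2 ^ Γ * q ^ Γ := Nat.mul_le_mul_right _ h2
      · rw [if_neg h]
        calc (q + 1) ^ Γ ≤ (2 * q) ^ Γ := Nat.pow_le_pow_left (by omega) _
          _ = 2 ^ Γ * q ^ Γ := Nat.mul_pow 2 q Γ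
    exact_mod_cast hnat
  have hK1 : (1:ℝ) ≤ (k : ℝ) := by exact_mod_cast hk
  have hK0 : (0:ℝ) < (k : ℝ) := lt_of_lt_of_le one_pos hK1
  have hP0 : (0:ℝ) < (Nq Γ Q q : ℝ) := lt_of_lt_of_le one_pos hP1
  have hP'0 : (0:ℝ) < (Nq Γ Q (q + 1) : ℝ) := lt_of_lt_of_le one_pos hP'1
  -- endpoints of R_q(k)
  set A : ℝ := α * θ * (k : ℝ) * (Nq Γ Q (q + 1) : ℝ) ^ (θ - 1) with hA
  set B : ℝ := α * θ * (k : ℝ) * (Nq Γ Q q : ℝ) ^ (θ - 1) with hB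
  have hA0 : 0 < A := by rw [hA]; positivity
  have hB0 : 0 < B := by rw [hB]; positivity
  set M : ℝ := (k : ℝ) ^ (Th θ / 2) * A ^ (-(Th θ + 1) / 2) with hM
  have hM0 : 0 ≤ M := by rw [hM]; positivity
  -- term bound
  have hterm : ∀ r ∈ Rq α θ Γ Q q k,
      ‖(((k : ℝ) ^ (Th θ / 2) * (r : ℝ) ^ (-(Th θ + 1) / 2) : ℝ) : ℂ) *
        e2 (betaC α θ * (k : ℝ) ^ Th θ * (r : ℝ) ^ (1 - Th θ))‖ ≤ M := by
    intro r hr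
    simp only [Rq, intIoc, Finset.mem_Icc] at hr
    have hrA : A < (r : ℝ) := by
      have h1 : A < (⌊A⌋ : ℝ) + 1 := Int.lt_floor_add_one A
      have h2 : (⌊A⌋ : ℝ) + 1 ≤ (r : ℝ) := by exact_mod_cast hr.1
      linarith
    have hr0 : (0:ℝ) < (r : ℝ) := lt_trans hA0 hrA
    rw [norm_mul, norm_e2, mul_one, Complex.norm_real, Real.norm_eq_abs,
      abs_of_nonneg (by positivity)]
    rw [hM]
    refine mul_le_mul_of_nonneg_left ?_ (by positivity)
    exact Real.rpow_le_rpow_of_nonpos hA0 hrA.le (by linarith)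
  -- cardinality bound
  have hcard : ((Rq α θ Γ Q q k).card : ℝ) ≤ 2 * B := by
    rcases (Rq α θ Γ Q q k).eq_empty_or_nonempty with h | h
    · rw [h]; simp; positivity
    · have hne : ⌊A⌋ + 1 ≤ ⌊B⌋ := by
        have := h
        simp only [Rq, intIoc, Finset.nonempty_Icc] at this
        exact this
      have hfA : 0 ≤ ⌊A⌋ := Int.floor_nonneg.mpr hA0.le
      have hB1 : (1:ℝ) ≤ B := by
        have h1 : (1:ℤ) ≤ ⌊B⌋ := by omega
        have h2 : ((⌊B⌋:ℤ) : ℝ) ≤ B := Int.floor_le B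
        have h6 : ((1:ℤ):ℝ) ≤ ((⌊B⌋:ℤ):ℝ) := by exact_mod_cast h1
        push_cast at h6
        linarith
      have hcardeq : (Rq α θ Γ Q q k).card = (⌊B⌋ + 1 - (⌊A⌋ + 1)).toNat := by
        simp only [Rq, intIoc]
        exact Int.card_Icc _ _
      rw [hcardeq]
      have h3 : ((⌊B⌋ + 1 - (⌊A⌋ + 1)).toNat : ℝ) = (⌊B⌋ : ℝ) - (⌊A⌋ : ℝ) := by
        rw [show ((⌊B⌋ + 1 - (⌊A⌋ + 1)).toNat : ℝ) = (((⌊B⌋ + 1 - (⌊A⌋ + 1)).toNat : ℤ) : ℝ) by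
          push_cast; ring]
        rw [Int.toNat_of_nonneg (by omega)]
        push_cast; ring
      rw [h3]
      have h4 : (⌊B⌋ : ℝ) ≤ B := Int.floor_le B
      have h5 : A - 1 < (⌊A⌋ : ℝ) := by
        have := Int.lt_floor_add_one A; linarith
      linarith
  -- norm of EB
  have hEB : ‖EB α θ Γ Q q k‖ ≤ ‖c1 α θ‖ * (2 * B * M) := by
    rw [EB, norm_mul]
    refine mul_le_mul_of_nonneg_left ?_ (norm_nonneg _)
    calc ‖∑ r ∈ Rq α θ Γ Q q k,
          (((k : ℝ) ^ (Th θ / 2) * (r : ℝ) ^ (-(Th θ + 1) / 2) : ℝ) : ℂ) *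
            e2 (betaC α θ * (k : ℝ) ^ Th θ * (r : ℝ) ^ (1 - Th θ))‖
        ≤ ∑ r ∈ Rq α θ Γ Q q k,
          ‖(((k : ℝ) ^ (Th θ / 2) * (r : ℝ) ^ (-(Th θ + 1) / 2) : ℝ) : ℂ) *
            e2 (betaC α θ * (k : ℝ) ^ Th θ * (r : ℝ) ^ (1 - Th θ))‖ :=
          norm_sum_le _ _
      _ ≤ (Rq α θ Γ Q q k).card • M := Finset.sum_le_card_nsmul _ _ M hterm
      _ = ((Rq α θ Γ Q q k).card : ℝ) * M := nsmul_eq_mul _ _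
      _ ≤ 2 * B * M := mul_le_mul_of_nonneg_right hcard hM0
  -- algebra
  have halg : 2 * B * M ≤ 2 * (α * θ) ^ ((1 - Th θ) / 2) * 2 ^ Γ *
      ((k : ℝ) ^ ((1:ℝ) / 2) * (Nq Γ Q q : ℝ) ^ (θ / 2)) := by
    rw [hM, hA, hB]
    exact alg_aux θ (Th θ) hθ0 hθ1 hΘθ Γ (α * θ) (k : ℝ) (Nq Γ Q q : ℝ)
      (Nq Γ Q (q + 1) : ℝ) hc0 hK1 hP1 hP'1 hP'le
  have hsqrt : Real.sqrt ((k : ℝ) * (Nq Γ Q q : ℝ) ^ θ)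
      = (k : ℝ) ^ ((1:ℝ) / 2) * (Nq Γ Q q : ℝ) ^ (θ / 2) := by
    rw [Real.sqrt_eq_rpow, Real.mul_rpow hK0.le (by positivity),
      ← Real.rpow_mul hP0.le]
    congr 1
    ring
  have hrhs0 : (0:ℝ) ≤ (k : ℝ) ^ ((1:ℝ) / 2) * (Nq Γ Q q : ℝ) ^ (θ / 2) := by positivity
  calc ‖EB α θ Γ Q q k‖ ≤ ‖c1 α θ‖ * (2 * B * M) := hEB
    _ ≤ ‖c1 α θ‖ * (2 * (α * θ) ^ ((1 - Th θ) / 2) * 2 ^ Γ *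
        ((k : ℝ) ^ ((1:ℝ) / 2) * (Nq Γ Q q : ℝ) ^ (θ / 2))) :=
        mul_le_mul_of_nonneg_left halg (norm_nonneg _)
    _ = C0 * ((k : ℝ) ^ ((1:ℝ) / 2) * (Nq Γ Q q : ℝ) ^ (θ / 2)) := by rw [hC0]; ring
    _ ≤ max 1 C0 * ((k : ℝ) ^ ((1:ℝ) / 2) * (Nq Γ Q q : ℝ) ^ (θ / 2)) :=
        mul_le_mul_of_nonneg_right (le_max_right _ _) hrhs0
    _ = max 1 C0 * Real.sqrt ((k : ℝ) * (Nq Γ Q q : ℝ) ^ θ) := by rw [hsqrt]
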